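/- For all 1 ≤ i < j ≤ q, the identity C_{i,j} = M_{i,j} + Σ_{k=i+1}^{j−1} C_{i,k} M_{k,j} holds in A (the terms of C_{i,j} grouped according to the highest element of the admissible sequence). -/
import Mathlib


open scoped BigOperators

/-- A finite sequence of positive integers is *admissible* if between any two
occurrences of a number `s` there is an entry greater than `s`. -/
def IsAdmissible (l : List ℕ) : Prop :=
  ∀ (l₁ l₂ l₃ : List ℕ) (s : ℕ), l = l₁ ++ s :: (l₂ ++ s :: l₃) → ∃ t ∈ l₂, s < t

/-- `Dset n` is the set of admissible sequences all of whose entries lie in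
`{1, …, n-1}` (including the empty sequence). -/
def Dset (n : ℕ) : Set (List ℕ) :=
  {l | IsAdmissible l ∧ ∀ x ∈ l, 1 ≤ x ∧ x < n}

/-- The product `B i i₁ * B i₁ i₂ * ⋯ * B i_c j` along a sequence `[i₁, …, i_c]`;
the empty sequence contributes `B i j`. -/
def pathProd {A : Type*} [Ring A] (B : ℕ → ℕ → A) (i j : ℕ) : List ℕ → A
  | [] => B i j
  | a :: l => B i a * pathProd B a j l

/-- `M i j = Σ_{(i₁,…,i_c) ∈ D_{min(i,j)}} B i i₁ ⋯ B i_c j`. -/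
noncomputable def Mpoly {A : Type*} [Ring A] (B : ℕ → ℕ → A) (i j : ℕ) : A :=
  ∑ᶠ l ∈ Dset (min i j), pathProd B i j l

/-- `C i j` for `i < j` sums `B i i₁ ⋯ B i_c j` over sequences with
`(i, i₁, …, i_c) ∈ D_j`; and `C n n = M n n`. -/
noncomputable def Cpoly {A : Type*} [Ring A] (B : ℕ → ℕ → A) (i j : ℕ) : A :=
  if i = j then Mpoly B i j
  else ∑ᶠ l ∈ {l : List ℕ | (i :: l) ∈ Dset j}, pathProd B i j l

/-- The generators `B_{i,j}` of the free noncommutative unital ℤ-algebra. -/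
noncomputable def Bgen : ℕ → ℕ → FreeAlgebra ℤ (ℕ × ℕ) :=
  fun i j => FreeAlgebra.ι ℤ (i, j)

/-- The commuting indeterminates `B_{i,j}` of the polynomial ring `ℤ[B_{i,j}]`. -/
noncomputable def Bcomm : ℕ → ℕ → MvPolynomial (ℕ × ℕ) ℤ :=
  fun i j => MvPolynomial.X (i, j)

/-! ### Auxiliary lemmas -/

lemma IsAdmissible.infix {l m : List ℕ} (h : IsAdmissible l) (hm : m <:+: l) :
    IsAdmissible m := by
  obtain ⟨u, v, rfl⟩ := hm
  intro l₁ l₂ l₃ s heq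
  refine h (u ++ l₁) l₂ (l₃ ++ v) s ?_
  rw [heq]; simp

lemma length_lt_of_admissible : ∀ (n : ℕ) (l : List ℕ), IsAdmissible l →
    (∀ x ∈ l, x < n) → l.length < 2 ^ n := by
  intro n
  induction n with
  | zero =>
    intro l _ hb
    cases l with
    | nil => simp
    | cons a l => exact absurd (hb a (by simp)) (by omega)
  | succ n ih =>
    intro l hl hb
    by_cases hn : n ∈ l
    · obtain ⟨l₁, l₂, rfl⟩ := List.append_of_mem hn
      have hn1 : n ∉ l₁ := by
        intro h1
        obtain ⟨u, v, rfl⟩ := List.append_of_mem h1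
        obtain ⟨t, ht, htn⟩ := hl u v l₂ n (by simp)
        exact absurd (hb t (by simp [ht])) (by omega)
      have hn2 : n ∉ l₂ := by
        intro h2
        obtain ⟨u, v, rfl⟩ := List.append_of_mem h2
        obtain ⟨t, ht, htn⟩ := hl l₁ u v n (by simp)
        exact absurd (hb t (by simp [ht])) (by omega)
      have h1 := ih l₁ (hl.infix ⟨[], n :: l₂, by simp⟩)
        (fun x hx => by
          have h := hb x (by simp [hx])
          have : x ≠ n := fun h' => hn1 (h' ▸ hx)
          omega)
      have h2 := ih l₂ (hl.infix ⟨l₁ ++ [n], [], by simp⟩)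
        (fun x hx => by
          have h := hb x (by simp [hx])
          have : x ≠ n := fun h' => hn2 (h' ▸ hx)
          omega)
      have : (2:ℕ) ^ (n+1) = 2 ^ n + 2 ^ n := by ring
      simp only [List.length_append, List.length_cons]
      omega
    · have h1 := ih l hl (fun x hx => by
        have h := hb x hx
        have : x ≠ n := fun h' => hn (h' ▸ hx)
        omega)
      have : (2:ℕ) ^ n ≤ 2 ^ (n+1) := Nat.pow_le_pow_right (by norm_num) (by omega)
      omega

lemma finite_short (n : ℕ) : ∀ N : ℕ, {l : List ℕ | (∀ x ∈ l, x < n) ∧ l.length < N}.Finite := by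
  intro N
  induction N with
  | zero => convert Set.finite_empty; ext l; simp
  | succ N ih =>
    refine Set.Finite.subset ((((Set.finite_Iio n).prod ih).image
      (fun p : ℕ × List ℕ => p.1 :: p.2)).insert []) ?_
    rintro (_ | ⟨a, l⟩) ⟨hb, hlen⟩
    · simp
    · exact Set.mem_insert_iff.2 (Or.inr ⟨(a, l), ⟨hb a (by simp),
        fun x hx => hb x (by simp [hx]), by simpa using hlen⟩, rfl⟩)

lemma Dset_finite (n : ℕ) : (Dset n).Finite :=
  (finite_short n (2 ^ n)).subset (fun l hl =>
    ⟨fun x hx => (hl.2 x hx).2,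
      length_lt_of_admissible n l hl.1 (fun x hx => (hl.2 x hx).2)⟩)

lemma Sset_finite (i j : ℕ) : {l : List ℕ | (i :: l) ∈ Dset j}.Finite :=
  (finite_short j (2 ^ j)).subset (fun l hl =>
    ⟨fun x hx => (hl.2 x (by simp [hx])).2,
      length_lt_of_admissible j l (hl.1.infix ⟨[i], [], by simp⟩)
        (fun x hx => (hl.2 x (by simp [hx])).2)⟩)

lemma append_cons_inj {k : ℕ} : ∀ {a a' b b' : List ℕ}, k ∉ a → k ∉ a' →
    a ++ k :: b = a' ++ k :: b' → a = a' ∧ b = b' := by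
  intro a
  induction a with
  | nil =>
    intro a' b b' _ ha' h
    cases a' with
    | nil => simpa using h
    | cons y a'' =>
      simp only [List.nil_append, List.cons_append, List.cons.injEq] at h
      exact absurd (show k ∈ y :: a'' by simp [h.1]) ha'
  | cons x a ih =>
    intro a' b b' ha ha' h
    cases a' with
    | nil =>
      simp only [List.cons_append, List.nil_append, List.cons.injEq] at h
      exact absurd (show k ∈ x :: a by simp [← h.1]) ha
    | cons y a'' =>
      simp only [List.cons_append, List.cons.injEq] at h
      obtain ⟨h1, h2⟩ := ih (fun hx => ha (List.mem_cons_of_mem x hx))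
        (fun hx => ha' (List.mem_cons_of_mem y hx)) h.2
      exact ⟨by rw [h.1, h1], h2⟩

lemma isAdmissible_cons {i : ℕ} {l : List ℕ} (hl : IsAdmissible l)
    (hli : ∀ x ∈ l, x < i) : IsAdmissible (i :: l) := by
  intro l₁ l₂ l₃ s heq
  cases l₁ with
  | nil =>
    simp only [List.nil_append, List.cons.injEq] at heq
    have : s ∈ l := by rw [heq.2]; simp
    have := hli s this
    omega
  | cons x l₁' =>
    simp only [List.cons_append, List.cons.injEq] at heq
    exact hl l₁' l₂ l₃ s heq.2

lemma isAdmissible_append {a b : List ℕ} {k : ℕ}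
    (ha : IsAdmissible a) (hb : IsAdmissible b)
    (hak : ∀ x ∈ a, x < k) (hbk : ∀ x ∈ b, x < k) :
    IsAdmissible (a ++ k :: b) := by
  intro l₁ l₂ l₃ s heq
  rcases List.append_eq_append_iff.1 heq with ⟨w, hw1, hw2⟩ | ⟨w, hw1, hw2⟩
  · -- l₁ = a ++ w, k :: b = w ++ s :: (l₂ ++ s :: l₃)
    cases w with
    | nil =>
      simp only [List.nil_append, List.cons.injEq] at hw2
      have hsb : s ∈ b := by rw [hw2.2]; simp
      have := hbk s hsb
      omega
    | cons x w' =>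
      simp only [List.cons_append, List.cons.injEq] at hw2
      exact hb w' l₂ l₃ s hw2.2
  · -- a = l₁ ++ w, s :: (l₂ ++ s :: l₃) = w ++ k :: b
    cases w with
    | nil =>
      simp only [List.nil_append, List.cons.injEq] at hw2
      have hsb : s ∈ b := by rw [← hw2.2]; simp
      have := hbk s hsb
      omega
    | cons y w' =>
      simp only [List.cons_append, List.cons.injEq] at hw2
      obtain ⟨hsy, hw2'⟩ := hw2
      have hsa : s ∈ a := by rw [hw1, hsy]; simp
      have hsk : s < k := hak s hsa
      rcases List.append_eq_append_iff.1 hw2' with ⟨u, hu1, hu2⟩ | ⟨u, hu1, hu2⟩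
      · cases u with
        | nil =>
          simp only [List.nil_append, List.cons.injEq] at hu2
          omega
        | cons z u' =>
          simp only [List.cons_append, List.cons.injEq] at hu2
          refine ha l₁ l₂ u' s ?_
          rw [hw1, hu1, ← hsy, ← hu2.1]
      · cases u with
        | nil =>
          simp only [List.nil_append, List.cons.injEq] at hu2
          omega
        | cons z u' =>
          simp only [List.cons_append, List.cons.injEq] at hu2
          exact ⟨k, by rw [hu1, ← hu2.1]; simp, hsk⟩

lemma pathProd_append {A : Type*} [Ring A] (B : ℕ → ℕ → A) (k : ℕ) :
    ∀ (l₁ : List ℕ) (i j : ℕ) (l₂ : List ℕ),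
      pathProd B i j (l₁ ++ k :: l₂) = pathProd B i k l₁ * pathProd B k j l₂ := by
  intro l₁
  induction l₁ with
  | nil => intro i j l₂; simp [pathProd]
  | cons a l ih =>
    intro i j l₂
    simp only [List.cons_append, pathProd, List.append_eq, ih, mul_assoc]

/-- Decomposition of `{l | i :: l ∈ Dset j}` by the maximum entry of `l`. -/
lemma S_decomp {i j : ℕ} (hi : 1 ≤ i) (hij : i < j) :
    {l : List ℕ | (i :: l) ∈ Dset j} =
      Dset i ∪ ⋃ k ∈ (Finset.Ioo i j : Set ℕ),
        (fun p : List ℕ × List ℕ => p.1 ++ k :: p.2) ''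
          ({l : List ℕ | (i :: l) ∈ Dset k} ×ˢ Dset k) := by
  ext l
  constructor
  · rintro ⟨hadm, hb⟩
    by_cases hsmall : ∀ x ∈ l, x < i
    · left
      exact ⟨hadm.infix ⟨[i], [], by simp⟩,
        fun x hx => ⟨(hb x (by simp [hx])).1, hsmall x hx⟩⟩
    · right
      push_neg at hsmall
      obtain ⟨x₀, hx₀, hix₀⟩ := hsmall
      have hne : l.toFinset.Nonempty := ⟨x₀, List.mem_toFinset.2 hx₀⟩
      set m := l.toFinset.max' hne with hm
      have hml : m ∈ l := List.mem_toFinset.1 (l.toFinset.max'_mem hne)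
      have hmax : ∀ x ∈ l, x ≤ m := fun x hx => l.toFinset.le_max' x (List.mem_toFinset.2 hx)
      have him : i ≤ m := le_trans hix₀ (hmax x₀ hx₀)
      have hmi : m ≠ i := by
        intro hmi
        obtain ⟨u, v, hl⟩ := List.append_of_mem (hmi ▸ hml)
        obtain ⟨t, ht, hti⟩ := hadm [] u v i (by rw [hl]; simp)
        have := hmax t (by simp [hl, ht])
        omega
      have hmj : m < j := (hb m (by simp [hml])).2
      obtain ⟨l₁, l₂, hsplit⟩ := List.append_of_mem hml
      have hm1 : m ∉ l₁ := by
        intro h1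
        obtain ⟨u, v, hl⟩ := List.append_of_mem h1
        obtain ⟨t, ht, htm⟩ := hadm (i :: u) v l₂ m (by rw [hsplit, hl]; simp)
        have := hmax t (by simp [hsplit, hl, ht])
        omega
      have hm2 : m ∉ l₂ := by
        intro h2
        obtain ⟨u, v, hl⟩ := List.append_of_mem h2
        obtain ⟨t, ht, htm⟩ := hadm (i :: l₁) u v m (by rw [hsplit, hl]; simp)
        have := hmax t (by simp [hsplit, hl, ht])
        omega
      refine Set.mem_iUnion₂.2
        ⟨m, by simp [Finset.mem_Ioo]; omega, ⟨(l₁, l₂), ⟨?_, ?_⟩, hsplit.symm⟩⟩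
      · refine ⟨hadm.infix ⟨[], m :: l₂, by simp [hsplit]⟩, ?_⟩
        intro x hx
        rcases List.mem_cons.1 hx with rfl | hx'
        · exact ⟨hi, lt_of_le_of_ne him (Ne.symm hmi)⟩
        · refine ⟨(hb x (by simp [hsplit, hx'])).1, ?_⟩
          have h1 := hmax x (by simp [hsplit, hx'])
          have h2 : x ≠ m := fun h => hm1 (h ▸ hx')
          omega
      · refine ⟨hadm.infix ⟨i :: l₁ ++ [m], [], by simp [hsplit]⟩, ?_⟩
        intro x hx
        refine ⟨(hb x (by simp [hsplit, hx])).1, ?_⟩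
        have h1 := hmax x (by simp [hsplit, hx])
        have h2 : x ≠ m := fun h => hm2 (h ▸ hx)
        omega
  · rintro (⟨hadm, hb⟩ | hmem)
    · refine ⟨isAdmissible_cons hadm (fun x hx => (hb x hx).2), ?_⟩
      intro x hx
      rcases List.mem_cons.1 hx with rfl | hx'
      · exact ⟨hi, hij⟩
      · exact ⟨(hb x hx').1, lt_trans (hb x hx').2 hij⟩
    · obtain ⟨k, hk, ⟨l₁, l₂⟩, ⟨h1, h2⟩, rfl⟩ := Set.mem_iUnion₂.1 hmem
      simp only [Finset.coe_Ioo, Set.mem_Ioo] at hk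
      have hb1 : ∀ x ∈ l₁, x < k := fun x hx => (h1.2 x (by simp [hx])).2
      have hb2 : ∀ x ∈ l₂, x < k := fun x hx => (h2.2 x hx).2
      have : IsAdmissible ((i :: l₁) ++ k :: l₂) :=
        isAdmissible_append h1.1 h2.1 (fun x hx => (h1.2 x hx).2) hb2
      refine ⟨by simpa using this, ?_⟩
      intro x hx
      simp only [List.cons_append, List.mem_cons, List.mem_append] at hx
      rcases hx with rfl | hx | rfl | hx
      · exact ⟨hi, hij⟩
      · exact ⟨(h1.2 x (by simp [hx])).1, lt_trans (hb1 x hx) hk.2⟩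
      · exact ⟨by omega, hk.2⟩
      · exact ⟨(h2.2 x hx).1, lt_trans (hb2 x hx) hk.2⟩

/-- `C_{i,j} = M_{i,j} + Σ_{k=i+1}^{j-1} C_{i,k} M_{k,j}` for `1 ≤ i < j ≤ q`. -/
theorem C_eq_M_add_sum_CM (q i j : ℕ) (hi : 1 ≤ i) (hij : i < j) (hjq : j ≤ q) :
    Cpoly Bgen i j =
      Mpoly Bgen i j + ∑ k ∈ Finset.Ioo i j, Cpoly Bgen i k * Mpoly Bgen k j := by
  classical
  set B := Bgen with hB
  have hdisj : Disjoint (Dset i)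
      (⋃ k ∈ (Finset.Ioo i j : Set ℕ),
        (fun p : List ℕ × List ℕ => p.1 ++ k :: p.2) ''
          ({l : List ℕ | (i :: l) ∈ Dset k} ×ˢ Dset k)) := by
    rw [Set.disjoint_left]
    intro l hl hmem
    obtain ⟨k, hk, ⟨l₁, l₂⟩, _, rfl⟩ := Set.mem_iUnion₂.1 hmem
    simp only [Finset.coe_Ioo, Set.mem_Ioo] at hk
    have := (hl.2 k (by simp)).2
    omega
  have hpw : (↑(Finset.Ioo i j) : Set ℕ).PairwiseDisjoint
      (fun k => (fun p : List ℕ × List ℕ => p.1 ++ k :: p.2) ''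
        ({l : List ℕ | (i :: l) ∈ Dset k} ×ˢ Dset k)) := by
    intro k hk k' hk' hkk'
    simp only [Function.onFun]
    rw [Set.disjoint_left]
    rintro l ⟨⟨l₁, l₂⟩, ⟨h1, h2⟩, rfl⟩ ⟨⟨l₁', l₂'⟩, ⟨h1', h2'⟩, heq⟩
    have heq' : l₁' ++ k' :: l₂' = l₁ ++ k :: l₂ := heq
    have hle : ∀ x ∈ l₁ ++ k :: l₂, x ≤ k := by
      intro x hx
      rcases List.mem_append.1 hx with hx | hx
      · exact ((h1.2 x (by simp [hx])).2).le
      · rcases List.mem_cons.1 hx with rfl | hx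
        · exact le_rfl
        · exact ((h2.2 x hx).2).le
    have hle' : ∀ x ∈ l₁' ++ k' :: l₂', x ≤ k' := by
      intro x hx
      rcases List.mem_append.1 hx with hx | hx
      · exact ((h1'.2 x (by simp [hx])).2).le
      · rcases List.mem_cons.1 hx with rfl | hx
        · exact le_rfl
        · exact ((h2'.2 x hx).2).le
    have h1k : k' ≤ k := hle k' (by rw [← heq']; simp)
    have h2k : k ≤ k' := by
      refine hle' k ?_
      rw [heq']; simp
    exact hkk' (le_antisymm h2k h1k)
  have hfins : ∀ k ∈ (↑(Finset.Ioo i j) : Set ℕ),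
      ((fun p : List ℕ × List ℕ => p.1 ++ k :: p.2) ''
        ({l : List ℕ | (i :: l) ∈ Dset k} ×ˢ Dset k)).Finite :=
    fun k _ => (((Sset_finite i k).prod (Dset_finite k)).image _)
  have hinj : ∀ k, Set.InjOn (fun p : List ℕ × List ℕ => p.1 ++ k :: p.2)
      ({l : List ℕ | (i :: l) ∈ Dset k} ×ˢ Dset k) := by
    intro k
    rintro ⟨a, b⟩ ⟨ha, hb⟩ ⟨a', b'⟩ ⟨ha', hb'⟩ h
    have hka : k ∉ a := fun hx => absurd ((ha.2 k (by simp [hx])).2) (by omega)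
    have hka' : k ∉ a' := fun hx => absurd ((ha'.2 k (by simp [hx])).2) (by omega)
    obtain ⟨e1, e2⟩ := append_cons_inj hka hka' h
    simp only [Prod.mk.injEq]
    exact ⟨e1, e2⟩
  rw [Cpoly, if_neg hij.ne, S_decomp hi hij,
    finsum_mem_union hdisj (Dset_finite i) ((Finset.Ioo i j).finite_toSet.biUnion hfins),
    finsum_mem_biUnion hpw (Finset.Ioo i j).finite_toSet hfins, finsum_mem_coe_finset]
  congr 1
  · rw [Mpoly, min_eq_left hij.le]
  · refine Finset.sum_congr rfl fun k hk => ?_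
    rw [Finset.mem_Ioo] at hk
    rw [finsum_mem_image (hinj k),
      finsum_mem_eq_finite_toFinset_sum _ ((Sset_finite i k).prod (Dset_finite k)),
      ← Set.Finite.toFinset_prod, Finset.sum_product]
    simp only [pathProd_append]
    rw [← Finset.sum_mul_sum, Cpoly, if_neg (by omega : i ≠ k), Mpoly, min_eq_left hk.2.le,
      finsum_mem_eq_finite_toFinset_sum _ (Sset_finite i k),
      finsum_mem_eq_finite_toFinset_sum _ (Dset_finite k)]
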